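/- (Singular solution Ansatz for geodesic flows of Vlasov p-moments, one-dimensional case.) Let F be a finite set of pairs (n,s) ∈ ℕ × ℕ, let N ∈ ℕ, and for each (n,s) ∈ F let G_{ns} : ℝ × ℝ → ℝ be continuously differentiable, with ∂₁G_{ns} denoting its partial derivative in the first argument. Let Q_j, P_j : ℝ → ℝ (j = 1,…,N) be continuously differentiable curves satisfying, for all t and all j, Q̇_j(t) = Σ_{(n,s)∈F, n≥1} Σ_{k=1}^{N} n·P_j(t)^(n−1)·P_k(t)^s·G_{ns}(Q_j(t),Q_k(t)) and Ṗ_j(t) = − Σ_{(n,s)∈F} Σ_{k=1}^{N} P_j(t)^n·P_k(t)^s·∂₁G_{ns}(Q_j(t),Q_k(t)). Then for every m ∈ ℕ and every continuously differentiable compactly supported φ : ℝ → ℝ, the singular moments A_m(t) := Σ_j P_j(t)^m·δ_{Q_j(t)} satisfy the geodesic p-moment equations weakly: d/dt [ Σ_{j=1}^{N} P_j(t)^m·φ(Q_j(t)) ] = Σ_{(n,s)∈F} Σ_{j,k=1}^{N} P_k(t)^s·P_j(t)^(m+n−1)·( n·φ'(Q_j(t))·G_{ns}(Q_j(t),Q_k(t))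 − m·φ(Q_j(t))·∂₁G_{ns}(Q_j(t),Q_k(t)) ), where any term whose integer coefficient n or m vanishes is interpreted as 0 (so that the exponent m+n−1 only occurs when m+n ≥ 1). -/

import Mathlib

private lemma pow_aux (p : ℝ) (a b : ℕ) :
    (a : ℝ) * p ^ (a + b - 1) = (a : ℝ) * (p ^ (a - 1) * p ^ b) := by
  cases a with
  | zero => simp
  | succ a =>
    rw [show a + 1 + b - 1 = a + b from by omega, Nat.succ_sub_one, pow_add]

/-- singular solution Ansatz for geodesic flows of Vlasov p-moments, 1D.
If the parameters `(Q_j, P_j)` satisfy the stated canonical ODEs, then the singular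
moments `A_m(t) = Σ_j P_j(t)^m δ_{Q_j(t)}` satisfy the geodesic p-moment equations
weakly, i.e. paired against every C¹ compactly supported test function `φ`.
Terms whose integer coefficient (`n` or `m`) vanishes are interpreted as `0` via the
real coefficients `(n : ℝ)`, `(m : ℝ)`. -/
theorem singular_solution_ansatz_geodesic_pmoments
    (F : Finset (ℕ × ℕ)) (N : ℕ)
    (G : ℕ × ℕ → ℝ → ℝ → ℝ)
    (hG : ∀ ns ∈ F, ContDiff ℝ 1 fun x : ℝ × ℝ => G ns x.1 x.2)
    (Q P : Fin N → ℝ → ℝ)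
    (hQ : ∀ j, ContDiff ℝ 1 (Q j)) (hP : ∀ j, ContDiff ℝ 1 (P j))
    (hQeq : ∀ j t, deriv (Q j) t = ∑ ns ∈ F, ∑ k : Fin N,
        (ns.1 : ℝ) * P j t ^ (ns.1 - 1) * P k t ^ ns.2 * G ns (Q j t) (Q k t))
    (hPeq : ∀ j t, deriv (P j) t = - ∑ ns ∈ F, ∑ k : Fin N,
        P j t ^ ns.1 * P k t ^ ns.2 * deriv (fun x => G ns x (Q k t)) (Q j t)) :
    ∀ (m : ℕ) (φ : ℝ → ℝ), ContDiff ℝ 1 φ → HasCompactSupport φ → ∀ t : ℝ,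
      deriv (fun τ => ∑ j : Fin N, P j τ ^ m * φ (Q j τ)) t
      = ∑ ns ∈ F, ∑ j : Fin N, ∑ k : Fin N,
          P k t ^ ns.2 * P j t ^ (m + ns.1 - 1) *
            ((ns.1 : ℝ) * deriv φ (Q j t) * G ns (Q j t) (Q k t)
              - (m : ℝ) * φ (Q j t) * deriv (fun x => G ns x (Q k t)) (Q j t)) := by
  intro m φ hφ _ t
  have hPd : ∀ j, Differentiable ℝ (P j) := fun j => (hP j).differentiable one_ne_zero
  have hQd : ∀ j, Differentiable ℝ (Q j) := fun j => (hQ j).differentiable one_ne_zero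
  have hφd : Differentiable ℝ φ := hφ.differentiable one_ne_zero
  have key : HasDerivAt (fun τ => ∑ j : Fin N, P j τ ^ m * φ (Q j τ))
      (∑ j : Fin N, ((m : ℝ) * P j t ^ (m - 1) * deriv (P j) t * φ (Q j t)
        + P j t ^ m * (deriv φ (Q j t) * deriv (Q j) t))) t := by
    apply HasDerivAt.fun_sum
    intro j _
    exact (((hPd j) t).hasDerivAt.pow m).mul
      (((hφd (Q j t)).hasDerivAt).comp t ((hQd j t).hasDerivAt))
  rw [key.deriv, Finset.sum_comm]
  refine Finset.sum_congr rfl fun j _ => ?_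
  rw [hQeq j t, hPeq j t]
  simp only [mul_neg, neg_mul, Finset.mul_sum, Finset.sum_mul, ← Finset.sum_neg_distrib,
    ← Finset.sum_add_distrib]
  refine Finset.sum_congr rfl fun ns _ => ?_
  refine Finset.sum_congr rfl fun k _ => ?_
  have h1 := pow_aux (P j t) ns.1 m
  rw [Nat.add_comm ns.1 m] at h1
  have h2 := pow_aux (P j t) m ns.1
  linear_combination (P k t ^ ns.2 * φ (Q j t) * deriv (fun x => G ns x (Q k t)) (Q j t)) * h2
    - (P k t ^ ns.2 * deriv φ (Q j t) * G ns (Q j t) (Q k t)) * h1
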